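/- Let d ≥ 3 be an integer and define the polynomial f(x) = (x − d)·(x − √(d−1))²·(x + d + 2√(d−1)). Then for every finite simple graph G on n ≥ 1 vertices with maximum degree at most d, with adjacency-matrix eigenvalues λ_1, …, λ_n and average energy ε(G), one has (1/n)·∑_{i=1}^n f(|λ_i|) ≥ 2√(d−1)·(d + √(d−1))²·( ε(G) − √(d−1) − 1/(d + √(d−1)) ). -/

import Mathlib

open Polynomial Matrix Finset in
private lemma aux_charpoly_conj {m : ℕ} (U D : Matrix (Fin m) (Fin m) ℝ)
    (hU : U * star U = 1) :
    (U * D * star U).charpoly = D.charpoly := by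
  classical
  let φ : Matrix (Fin m) (Fin m) ℝ →+* Matrix (Fin m) (Fin m) ℝ[X] :=
    (Polynomial.C : ℝ →+* ℝ[X]).mapMatrix
  have hφ : φ U * φ (star U) = 1 := by
    rw [← _root_.map_mul φ, hU, _root_.map_one φ]
  have hkey : charmatrix (U * D * star U) = φ U * charmatrix D * φ (star U) := by
    rw [charmatrix, charmatrix]
    rw [mul_sub, sub_mul]
    congr 1
    · have hc := (Matrix.scalar_commute (X : ℝ[X]) (fun r' => Commute.all _ _)
        (φ (star U))).eq
      rw [mul_assoc, hc, ← mul_assoc, hφ, one_mul]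
    · rw [← _root_.map_mul φ, ← _root_.map_mul φ]
  rw [Matrix.charpoly, Matrix.charpoly, hkey, Matrix.det_mul, Matrix.det_mul]
  have h1 : (φ U).det * (φ (star U)).det = 1 := by
    rw [← Matrix.det_mul, hφ, Matrix.det_one]
  calc (φ U).det * (charmatrix D).det * (φ (star U)).det
      = (charmatrix D).det * ((φ U).det * (φ (star U)).det) := by ring
    _ = (charmatrix D).det := by rw [h1, mul_one]

open Polynomial Matrix Finset in
private lemma aux_sum_eig {m : ℕ} {A : Matrix (Fin m) (Fin m) ℝ} (hA : A.IsHermitian)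
    (μ : Fin m → ℝ)
    (hchar : A.charpoly = ∏ i : Fin m, (X - C (μ i)))
    (g : ℝ → ℝ) : ∑ i, g (μ i) = ∑ i, g (hA.eigenvalues i) := by
  classical
  have heig : A.charpoly = ∏ i : Fin m, (X - C (hA.eigenvalues i)) := by
    conv_lhs => rw [hA.spectral_theorem]
    rw [Unitary.conjStarAlgAut_apply]
    rw [aux_charpoly_conj _ _ ((Matrix.mem_unitaryGroup_iff).mp (hA.eigenvectorUnitary).2)]
    rw [Matrix.charpoly_of_upperTriangular _ (Matrix.blockTriangular_diagonal _)]
    simp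
  have hms : Multiset.map μ univ.val = Multiset.map hA.eigenvalues univ.val := by
    have h1 : ((Multiset.map μ univ.val).map (fun a => X - C a)).prod
        = ((Multiset.map hA.eigenvalues univ.val).map (fun a => X - C a)).prod := by
      rw [Multiset.map_map, Multiset.map_map]
      rw [show ((fun a => X - C a) ∘ μ) = fun i => X - C (μ i) from rfl,
        show ((fun a => X - C a) ∘ hA.eigenvalues) = fun i => X - C (hA.eigenvalues i) from rfl]
      rw [← Finset.prod_eq_multiset_prod, ← Finset.prod_eq_multiset_prod, ← hchar, ← heig]
    have h2 := congrArg Polynomial.roots h1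
    rwa [Polynomial.roots_multiset_prod_X_sub_C, Polynomial.roots_multiset_prod_X_sub_C] at h2
  calc ∑ i, g (μ i) = ((univ.val.map μ).map g).sum := by
        rw [Multiset.map_map]; exact Finset.sum_eq_multiset_sum _ _
    _ = ((univ.val.map hA.eigenvalues).map g).sum := by rw [hms]
    _ = ∑ i, g (hA.eigenvalues i) := by
        rw [Multiset.map_map]; exact (Finset.sum_eq_multiset_sum _ _).symm

open Polynomial Matrix Finset in
private lemma aux_trace_pow {m : ℕ} {A : Matrix (Fin m) (Fin m) ℝ} (hA : A.IsHermitian) (k : ℕ) :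
    Matrix.trace (A ^ k) = ∑ i, hA.eigenvalues i ^ k := by
  classical
  have hU : (hA.eigenvectorUnitary : Matrix (Fin m) (Fin m) ℝ)
      * star (hA.eigenvectorUnitary : Matrix (Fin m) (Fin m) ℝ) = 1 :=
    (Matrix.mem_unitaryGroup_iff).mp (hA.eigenvectorUnitary).2
  have hU' : star (hA.eigenvectorUnitary : Matrix (Fin m) (Fin m) ℝ)
      * (hA.eigenvectorUnitary : Matrix (Fin m) (Fin m) ℝ) = 1 :=
    (Matrix.mem_unitaryGroup_iff').mp (hA.eigenvectorUnitary).2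
  set Um : Matrix (Fin m) (Fin m) ℝ := (hA.eigenvectorUnitary : Matrix (Fin m) (Fin m) ℝ)
  set D : Matrix (Fin m) (Fin m) ℝ := Matrix.diagonal (RCLike.ofReal ∘ hA.eigenvalues)
  have hspec : A = Um * D * star Um := hA.spectral_theorem
  have hpow : A ^ k = Um * D ^ k * star Um := by
    induction k with
    | zero => rw [pow_zero, pow_zero, mul_one, hU]
    | succ k ih =>
      rw [pow_succ, ih]
      conv_lhs => rw [hspec]
      have h5 : star Um * (Um * D * star Um) = D * star Um := by
        rw [← mul_assoc, ← mul_assoc, hU', one_mul]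
      rw [mul_assoc (Um * D ^ k), h5, ← mul_assoc, mul_assoc Um (D ^ k) D, ← pow_succ]
  rw [hpow, Matrix.trace_mul_cycle, hU', one_mul, Matrix.diagonal_pow, Matrix.trace_diagonal]
  simp

open Matrix Finset in
private lemma aux_row_sum {m : ℕ} (G : SimpleGraph (Fin m)) [DecidableRel G.Adj] (u : Fin m) :
    ∑ w, G.adjMatrix ℝ u w = (G.degree u : ℝ) := by
  simp only [SimpleGraph.adjMatrix_apply]
  rw [Finset.sum_boole]
  rw [SimpleGraph.degree, SimpleGraph.neighborFinset_eq_filter]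

open Matrix Finset in
private lemma aux_col_sum {m : ℕ} (G : SimpleGraph (Fin m)) [DecidableRel G.Adj] (u : Fin m) :
    ∑ v, G.adjMatrix ℝ v u = (G.degree u : ℝ) := by
  have h : ∀ v, G.adjMatrix ℝ v u = G.adjMatrix ℝ u v := by
    intro v
    conv_lhs => rw [← SimpleGraph.transpose_adjMatrix]
    rfl
  rw [Finset.sum_congr rfl fun v _ => h v]
  exact aux_row_sum G u

open Matrix Finset in
private lemma aux_tot_sum {m : ℕ} (G : SimpleGraph (Fin m)) [DecidableRel G.Adj] :
    ∑ v, ∑ w, (G.adjMatrix ℝ * G.adjMatrix ℝ) v w = ∑ u, (G.degree u : ℝ) ^ 2 := by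
  simp only [Matrix.mul_apply]
  calc ∑ v, ∑ w, ∑ u, G.adjMatrix ℝ v u * G.adjMatrix ℝ u w
      = ∑ v, ∑ u, ∑ w, G.adjMatrix ℝ v u * G.adjMatrix ℝ u w :=
        Finset.sum_congr rfl fun v _ => Finset.sum_comm
    _ = ∑ u, ∑ v, ∑ w, G.adjMatrix ℝ v u * G.adjMatrix ℝ u w := Finset.sum_comm
    _ = ∑ u, (∑ v, G.adjMatrix ℝ v u) * (∑ w, G.adjMatrix ℝ u w) := by
        refine Finset.sum_congr rfl fun u _ => ?_
        rw [Finset.sum_mul]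
        exact Finset.sum_congr rfl fun v _ => (Finset.mul_sum _ _ _).symm
    _ = ∑ u, (G.degree u : ℝ) ^ 2 := by
        refine Finset.sum_congr rfl fun u _ => ?_
        rw [aux_row_sum G u, aux_col_sum G u, sq]

open Matrix Finset in
private lemma aux_entry {m : ℕ} (G : SimpleGraph (Fin m)) [DecidableRel G.Adj] (v w : Fin m) :
    (G.adjMatrix ℝ * G.adjMatrix ℝ) v w
      = ((G.neighborFinset v ∩ G.neighborFinset w).card : ℝ) := by
  rw [SimpleGraph.adjMatrix_mul_apply]
  simp only [SimpleGraph.adjMatrix_apply]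
  rw [Finset.sum_boole]
  congr 1
  congr 1
  ext x
  simp only [Finset.mem_filter, Finset.mem_inter, SimpleGraph.mem_neighborFinset]
  constructor
  · rintro ⟨h1, h2⟩; exact ⟨h1, (G.adj_comm x w).mp h2⟩
  · rintro ⟨h1, h2⟩; exact ⟨h1, (G.adj_comm w x).mp h2⟩

open Matrix Finset in
private lemma aux_trace_four {m : ℕ} (G : SimpleGraph (Fin m)) [DecidableRel G.Adj] :
    ∑ u, (G.degree u : ℝ) ^ 2 + (∑ u, (G.degree u : ℝ) ^ 2 - ∑ u, (G.degree u : ℝ))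
      ≤ Matrix.trace ((G.adjMatrix ℝ) ^ 4) := by
  classical
  set A := G.adjMatrix ℝ with hA
  set B := A * A with hB
  have hBsym : ∀ v w, B v w = B w v := fun v w => by
    rw [hB, aux_entry, aux_entry, Finset.inter_comm]
  have hcard := aux_entry G
  have hdiag : ∀ v, B v v = (G.degree v : ℝ) := fun v =>
    G.adjMatrix_mul_self_apply_self v
  have htr : Matrix.trace (A ^ 4) = ∑ v, ∑ u, (B v u) ^ 2 := by
    have h4 : A ^ 4 = B * B := by
      rw [hB, show (4:ℕ) = 2 + 2 from rfl, pow_add, pow_two]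
    rw [h4]
    calc Matrix.trace (B * B) = ∑ v, ∑ u, B v u * B u v := by
          simp [Matrix.trace, Matrix.diag, Matrix.mul_apply]
      _ = ∑ v, ∑ u, (B v u) ^ 2 := by
          refine Finset.sum_congr rfl fun v _ => Finset.sum_congr rfl fun u _ => ?_
          rw [hBsym u v, sq]
  have hsq : ∀ v u, B v u ≤ (B v u) ^ 2 := by
    intro v u
    rw [hB, hcard]
    exact_mod_cast Nat.le_self_pow two_ne_zero _
  have hsplit : ∀ v, ∑ u, (B v u) ^ 2
      = (G.degree v : ℝ) ^ 2 + ∑ u ∈ univ.erase v, (B v u) ^ 2 := by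
    intro v
    rw [← Finset.add_sum_erase univ _ (mem_univ v), hdiag v]
  have hsplit2 : ∀ v, ∑ u ∈ univ.erase v, B v u = (∑ u, B v u) - (G.degree v : ℝ) := by
    intro v
    rw [← Finset.add_sum_erase univ (fun u => B v u) (mem_univ v), hdiag v]
    ring
  have hstep : ∀ v, (G.degree v : ℝ) ^ 2 + ((∑ u, B v u) - (G.degree v : ℝ))
      ≤ ∑ u, (B v u) ^ 2 := by
    intro v
    rw [hsplit v, ← hsplit2 v]
    have : ∑ u ∈ univ.erase v, B v u ≤ ∑ u ∈ univ.erase v, (B v u) ^ 2 :=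
      Finset.sum_le_sum fun u _ => hsq v u
    linarith
  have htot : ∑ v, ∑ u, B v u = ∑ u, (G.degree u : ℝ) ^ 2 := aux_tot_sum G
  have := Finset.sum_le_sum fun v (_ : v ∈ univ) => hstep v
  rw [htr]
  rw [Finset.sum_add_distrib, Finset.sum_sub_distrib, htot] at this
  linarith

set_option maxHeartbeats 1000000 in
/-- Let `d ≥ 3` be an integer and let
`f x = (x − d)·(x − √(d−1))²·(x + d + 2√(d−1))`.  Then for every finite simple graph `G` on
`n ≥ 1` vertices with maximum degree at most `d`, with adjacency-matrix eigenvalues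
`μ 1, …, μ n` (with multiplicity) and average energy `ε = (1/n)·∑ i, |μ i|`, one has
`(1/n)·∑ i, f |μ i| ≥ 2√(d−1)·(d + √(d−1))²·(ε − √(d−1) − 1/(d + √(d−1)))`. -/
theorem polynomial_average_energy_bound
    (d n : ℕ) (hd : 3 ≤ d) (hn : 1 ≤ n)
    (G : SimpleGraph (Fin n)) [DecidableRel G.Adj]
    (hdeg : ∀ v : Fin n, G.degree v ≤ d)
    (f : ℝ → ℝ)
    (hf : ∀ x : ℝ, f x = (x - (d : ℝ)) * (x - Real.sqrt ((d : ℝ) - 1)) ^ 2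
      * (x + (d : ℝ) + 2 * Real.sqrt ((d : ℝ) - 1)))
    (μ : Fin n → ℝ)
    (hchar : (G.adjMatrix ℝ).charpoly
      = ∏ i : Fin n, (Polynomial.X - Polynomial.C (μ i))) :
    2 * Real.sqrt ((d : ℝ) - 1) * ((d : ℝ) + Real.sqrt ((d : ℝ) - 1)) ^ 2
        * ((1 / (n : ℝ)) * (∑ i : Fin n, |μ i|)
            - Real.sqrt ((d : ℝ) - 1) - 1 / ((d : ℝ) + Real.sqrt ((d : ℝ) - 1)))
      ≤ (1 / (n : ℝ)) * ∑ i : Fin n, f |μ i| := by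
  classical
  have hd3 : (3 : ℝ) ≤ (d : ℝ) := by exact_mod_cast hd
  have hn1 : (1 : ℝ) ≤ (n : ℝ) := by exact_mod_cast hn
  have hn0 : (0 : ℝ) < (n : ℝ) := by linarith
  set s : ℝ := Real.sqrt ((d : ℝ) - 1) with hsdef
  have hs2 : s ^ 2 = (d : ℝ) - 1 := Real.sq_sqrt (by linarith)
  have hs0 : (0 : ℝ) ≤ s := Real.sqrt_nonneg _
  have hs1 : (1 : ℝ) ≤ s := by nlinarith [hs2, hs0, hd3]
  have hds : (0 : ℝ) < (d : ℝ) + s := by linarith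
  set q : ℝ := 1 / ((d : ℝ) + s) with hqdef
  have hq : q * ((d : ℝ) + s) = 1 := by
    rw [hqdef]; field_simp
  have hq0 : (0 : ℝ) ≤ q := by positivity
  set u : ℝ := 1 / (n : ℝ) with hudef
  have hu : u * (n : ℝ) = 1 := by rw [hudef]; field_simp
  have hu0 : (0 : ℝ) ≤ u := by positivity
  -- Hermitian adjacency matrix
  have hHerm : (G.adjMatrix ℝ).IsHermitian := by
    rw [Matrix.IsHermitian, Matrix.conjTranspose_eq_transpose_of_trivial,
      SimpleGraph.transpose_adjMatrix]
  -- power sums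
  have hP2 : ∑ i, (μ i) ^ 2 = ∑ v, (G.degree v : ℝ) := by
    rw [aux_sum_eig hHerm μ hchar (fun x => x ^ 2), ← aux_trace_pow hHerm 2]
    rw [pow_two, Matrix.trace]
    refine Finset.sum_congr rfl fun v _ => ?_
    rw [Matrix.diag_apply]
    exact G.adjMatrix_mul_self_apply_self v
  have hP4 : ∑ v, (G.degree v : ℝ) ^ 2 + (∑ v, (G.degree v : ℝ) ^ 2 - ∑ v, (G.degree v : ℝ))
      ≤ ∑ i, (μ i) ^ 4 := by
    rw [aux_sum_eig hHerm μ hchar (fun x => x ^ 4), ← aux_trace_pow hHerm 4]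
    exact aux_trace_four G
  set Dd1 : ℝ := ∑ v, (G.degree v : ℝ) with hDd1def
  set Dd2 : ℝ := ∑ v, (G.degree v : ℝ) ^ 2 with hDd2def
  set P2 : ℝ := ∑ i, (μ i) ^ 2 with hP2def
  set P4 : ℝ := ∑ i, (μ i) ^ 4 with hP4def
  set E : ℝ := ∑ i : Fin n, |μ i| with hEdef
  have hCS : Dd1 ^ 2 ≤ (n : ℝ) * Dd2 := by
    rw [hDd1def, hDd2def]
    have := _root_.sq_sum_le_card_mul_sum_sq (s := (Finset.univ : Finset (Fin n)))
      (f := fun v => (G.degree v : ℝ))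
    simpa using this
  have hDd1d : Dd1 ≤ (n : ℝ) * (d : ℝ) := by
    rw [hDd1def]
    calc ∑ v, (G.degree v : ℝ) ≤ ∑ _v : Fin n, (d : ℝ) :=
          Finset.sum_le_sum fun v _ => by exact_mod_cast hdeg v
      _ = (n : ℝ) * (d : ℝ) := by rw [Finset.sum_const, Finset.card_univ, Fintype.card_fin,
          nsmul_eq_mul]
  -- expand f at |x|
  have hterm : ∀ x : ℝ, f |x| = x ^ 4 - (3 * s ^ 2 + (d : ℝ) ^ 2 + 2 * s * (d : ℝ)) * x ^ 2
      + 2 * s * (s ^ 2 + (d : ℝ) ^ 2 + 2 * s * (d : ℝ)) * |x| - s ^ 2 * (d : ℝ) * ((d : ℝ) + 2 * s) := by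
    intro x
    rw [hf]
    linear_combination (|x| ^ 2 + x ^ 2 - (3 * s ^ 2 + (d : ℝ) ^ 2 + 2 * s * (d : ℝ))) * (sq_abs x)
  have hFsum : ∑ i : Fin n, f |μ i|
      = P4 - (3 * s ^ 2 + (d : ℝ) ^ 2 + 2 * s * (d : ℝ)) * P2
        + 2 * s * (s ^ 2 + (d : ℝ) ^ 2 + 2 * s * (d : ℝ)) * E
        - (n : ℝ) * (s ^ 2 * (d : ℝ) * ((d : ℝ) + 2 * s)) := by
    rw [Finset.sum_congr rfl fun i _ => hterm (μ i)]
    rw [Finset.sum_sub_distrib, Finset.sum_add_distrib, Finset.sum_sub_distrib,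
      ← Finset.mul_sum, ← Finset.mul_sum, Finset.sum_const, Finset.card_univ, Fintype.card_fin,
      nsmul_eq_mul]
  -- the key algebraic inequality
  have hK4 : 4 * (d : ℝ) ≤ 3 * s ^ 2 + (d : ℝ) ^ 2 + 2 * s * (d : ℝ) + 1 := by
    nlinarith [mul_nonneg (by linarith : (0:ℝ) ≤ s - 1) (by linarith : (0:ℝ) ≤ (d:ℝ))]
  have hfac1 : (0 : ℝ) ≤ (n : ℝ) * (d : ℝ) - Dd1 := by linarith
  have hfac2 : (0 : ℝ) ≤ (3 * s ^ 2 + (d : ℝ) ^ 2 + 2 * s * (d : ℝ) + 1) * (n : ℝ)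
      - 2 * (Dd1 + (n : ℝ) * (d : ℝ)) := by
    have h41 : 4 * (d : ℝ) * (n : ℝ)
        ≤ (3 * s ^ 2 + (d : ℝ) ^ 2 + 2 * s * (d : ℝ) + 1) * (n : ℝ) :=
      mul_le_mul_of_nonneg_right hK4 (le_of_lt hn0)
    linarith
  have hprod : (0 : ℝ) ≤ ((n : ℝ) * (d : ℝ) - Dd1)
      * ((3 * s ^ 2 + (d : ℝ) ^ 2 + 2 * s * (d : ℝ) + 1) * (n : ℝ)
        - 2 * (Dd1 + (n : ℝ) * (d : ℝ))) := mul_nonneg hfac1 hfac2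
  have hId : 2 * ((n : ℝ) * (d : ℝ)) ^ 2
      - (3 * s ^ 2 + (d : ℝ) ^ 2 + 2 * s * (d : ℝ) + 1) * (n : ℝ) * ((n : ℝ) * (d : ℝ))
      + (n : ℝ) ^ 2 * (2 * s * (s ^ 2 + (d : ℝ) ^ 2 + 2 * s * (d : ℝ)) * s
        + 2 * s * (s ^ 2 + (d : ℝ) ^ 2 + 2 * s * (d : ℝ)) * q
        - s ^ 2 * (d : ℝ) * ((d : ℝ) + 2 * s)) = 0 := by
    linear_combination ((n : ℝ) ^ 2 * 2 * s * ((d : ℝ) + s)) * hq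
      + ((n : ℝ) ^ 2 * (2 * s ^ 2 + 2 * (d : ℝ) * s + (d : ℝ) ^ 2 - (d : ℝ))) * hs2
  have hP4n : (n : ℝ) * (Dd2 + (Dd2 - Dd1)) ≤ (n : ℝ) * P4 :=
    mul_le_mul_of_nonneg_left hP4 (le_of_lt hn0)
  have nkey : (0 : ℝ) ≤ (n : ℝ) * (P4 - (3 * s ^ 2 + (d : ℝ) ^ 2 + 2 * s * (d : ℝ)) * Dd1
      - (n : ℝ) * (s ^ 2 * (d : ℝ) * ((d : ℝ) + 2 * s))
      - (n : ℝ) * (2 * s * (s ^ 2 + (d : ℝ) ^ 2 + 2 * s * (d : ℝ)) * (-s - q))) := by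
    nlinarith [hP4n, hCS, hprod, hId]
  have key : (0 : ℝ) ≤ P4 - (3 * s ^ 2 + (d : ℝ) ^ 2 + 2 * s * (d : ℝ)) * Dd1
      - (n : ℝ) * (s ^ 2 * (d : ℝ) * ((d : ℝ) + 2 * s))
      - (n : ℝ) * (2 * s * (s ^ 2 + (d : ℝ) ^ 2 + 2 * s * (d : ℝ)) * (-s - q)) :=
    (mul_nonneg_iff_of_pos_left hn0).mp nkey
  have h6 : u * ((n : ℝ) * (2 * s * (s ^ 2 + (d : ℝ) ^ 2 + 2 * s * (d : ℝ)) * (-s - q)))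
      ≤ u * (P4 - (3 * s ^ 2 + (d : ℝ) ^ 2 + 2 * s * (d : ℝ)) * Dd1
        - (n : ℝ) * (s ^ 2 * (d : ℝ) * ((d : ℝ) + 2 * s))) := by
    apply mul_le_mul_of_nonneg_left _ hu0
    linarith
  have hun : u * ((n : ℝ) * (2 * s * (s ^ 2 + (d : ℝ) ^ 2 + 2 * s * (d : ℝ)) * (-s - q)))
      = 2 * s * (s ^ 2 + (d : ℝ) ^ 2 + 2 * s * (d : ℝ)) * (-s - q) := by
    rw [← mul_assoc, hu, one_mul]
  rw [hun] at h6
  rw [hFsum, ← hP2def] at *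
  rw [hP2] at *
  nlinarith [h6]
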